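/- Let f : ℝ≥0 → ℝ≥0 be continuous with f(0) = 0 and compact support, and suppose sup f ≥ h for some h > 0 (so the h-trimming of the real tree T_f coded by f is non-empty). Then the h-trimming Tr^h(T_f) := {x ∈ T_f : sup_{y ⪰ x} d_f(x,y) ≥ h} is isometric, via a root-preserving isometry, to the real tree T_{f_h} coded by the h-cut f_h := f − Λ_{0,h}(f). -/

import Mathlib

open Set
open scoped NNReal ENNReal

/-- Solution data for the two-sided Skorohod reflection problem of `f` on `[0,h]`:
`c0` and `ch` are the compensators at `0` and at `h`,
and `fun t => f t + ch t + c0 t` is the reflected path `Λ_{0,h}(f)`.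
The support conditions on the measures `dc⁰` and `d(−cʰ)` are phrased as:
the compensator is constant on every (closed) interval on which the reflected
path avoids the corresponding boundary. -/
structure SkorohodPair (h : ℝ) (f c0 ch : ℝ≥0 → ℝ) : Prop where
  cont0 : Continuous c0
  conth : Continuous ch
  init0 : c0 0 = 0
  inith : ch 0 = 0
  mem_Icc : ∀ t, f t + ch t + c0 t ∈ Set.Icc (0 : ℝ) h
  mono0 : Monotone c0
  antih : Antitone ch
  flat0 : ∀ a b : ℝ≥0, a ≤ b → (∀ t ∈ Set.Icc a b, f t + ch t + c0 t ≠ 0) → c0 b = c0 a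
  flath : ∀ a b : ℝ≥0, a ≤ b → (∀ t ∈ Set.Icc a b, f t + ch t + c0 t ≠ h) → ch b = ch a

/-- The pseudo-distance `d_f(s,t) = f s + f t − 2 inf_{[s∧t, s∨t]} f` on times; the real
tree `T_f` coded by `f` is the quotient of `ℝ≥0` by `d_f = 0`, with projection `p_f` and
root `p_f 0`. -/
noncomputable def treeDist (f : ℝ≥0 → ℝ) (s t : ℝ≥0) : ℝ :=
  f s + f t - 2 * sInf (f '' Set.Icc (min s t) (max s t))

/-- `ancT f a b` means `p_f a ⪯ p_f b` in the tree coded by `f`, i.e.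
`inf_{[a∧b, a∨b]} f = f a`. -/
def ancT (f : ℝ≥0 → ℝ) (a b : ℝ≥0) : Prop :=
  sInf (f '' Set.Icc (min a b) (max a b)) = f a

/-- `p_f t` belongs to the `h`-trimming `Tr^h(T_f)`, i.e.
`sup { d_f(p_f t, y) : y ⪰ p_f t } ≥ h`. -/
def TrimTime (h : ℝ) (f : ℝ≥0 → ℝ) (t : ℝ≥0) : Prop :=
  h ≤ sSup ((fun s => treeDist f t s) '' {s | ancT f t s})

section TrimAux

open Filter Topology

/-! ### Generic lemmas about infima of continuous functions over intervals -/

lemma trim_icc_eq_uIcc (a b : ℝ≥0) : Icc (min a b) (max a b) = uIcc a b := by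
  rcases le_total a b with hab | hab
  · rw [min_eq_left hab, max_eq_right hab, uIcc_of_le hab]
  · rw [min_eq_right hab, max_eq_left hab, uIcc_of_ge hab]

lemma trim_left_mem (a b : ℝ≥0) : a ∈ uIcc a b := by
  rw [← trim_icc_eq_uIcc]; exact ⟨min_le_left _ _, le_max_left _ _⟩

lemma trim_right_mem (a b : ℝ≥0) : b ∈ uIcc a b := by
  rw [← trim_icc_eq_uIcc]; exact ⟨min_le_right _ _, le_max_right _ _⟩

lemma trim_img_ne (F : ℝ≥0 → ℝ) {a b : ℝ≥0} (hab : a ≤ b) : (F '' Icc a b).Nonempty :=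
  ⟨F a, a, ⟨le_refl a, hab⟩, rfl⟩

lemma trim_img_ne' (F : ℝ≥0 → ℝ) (a b : ℝ≥0) : (F '' uIcc a b).Nonempty :=
  ⟨F a, a, trim_left_mem a b, rfl⟩

lemma trim_img_bdd (F : ℝ≥0 → ℝ) (hF : Continuous F) (a b : ℝ≥0) :
    BddBelow (F '' Icc a b) := (isCompact_Icc.image hF).bddBelow

lemma trim_img_bdd' (F : ℝ≥0 → ℝ) (hF : Continuous F) (a b : ℝ≥0) :
    BddBelow (F '' uIcc a b) := by
  rw [← trim_icc_eq_uIcc]; exact (isCompact_Icc.image hF).bddBelow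

lemma trim_inf_le (F : ℝ≥0 → ℝ) (hF : Continuous F) {a b x : ℝ≥0} (hx : x ∈ Icc a b) :
    sInf (F '' Icc a b) ≤ F x :=
  csInf_le (trim_img_bdd F hF a b) (mem_image_of_mem F hx)

lemma trim_le_inf (F : ℝ≥0 → ℝ) {a b : ℝ≥0} {c : ℝ} (hab : a ≤ b)
    (H : ∀ x ∈ Icc a b, c ≤ F x) : c ≤ sInf (F '' Icc a b) := by
  refine le_csInf (trim_img_ne F hab) ?_
  rintro y ⟨x, hx, rfl⟩; exact H x hx

lemma trim_exists_min (F : ℝ≥0 → ℝ) (hF : Continuous F) {a b : ℝ≥0} (hab : a ≤ b) :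
    ∃ r ∈ Icc a b, F r = sInf (F '' Icc a b) := by
  obtain ⟨r, hr, hmin⟩ := isCompact_Icc.exists_isMinOn (nonempty_Icc.2 hab) hF.continuousOn
  refine ⟨r, hr, le_antisymm ?_ (trim_inf_le F hF hr)⟩
  exact trim_le_inf F hab fun x hx => hmin hx

/-- Limit transfer along the closure. -/
lemma trim_le_closure (F : ℝ≥0 → ℝ) (hF : Continuous F) {A : Set ℝ≥0} {z : ℝ≥0}
    (hz : z ∈ closure A) {c : ℝ} (H : ∀ x ∈ A, F x ≤ c) : F z ≤ c := by
  have ht : Filter.Tendsto F (nhdsWithin z A) (nhds (F z)) :=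
    (hF.tendsto z).mono_left nhdsWithin_le_nhds
  have hne : (nhdsWithin z A).NeBot := mem_closure_iff_nhdsWithin_neBot.1 hz
  exact le_of_tendsto ht (Filter.eventually_iff_exists_mem.2 ⟨A, self_mem_nhdsWithin, H⟩)

lemma trim_ge_closure (F : ℝ≥0 → ℝ) (hF : Continuous F) {A : Set ℝ≥0} {z : ℝ≥0}
    (hz : z ∈ closure A) {c : ℝ} (H : ∀ x ∈ A, c ≤ F x) : c ≤ F z := by
  have h2 : -F z ≤ -c := trim_le_closure (fun x => -F x) hF.neg hz (c := -c) (fun x hx => by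
    simpa using H x hx)
  linarith

lemma trim_dist_le_uIcc {x0 x y : ℝ≥0} (hy : y ∈ uIcc x0 x) : dist y x0 ≤ dist x x0 := by
  rcases le_total x0 x with hc | hc
  · rw [uIcc_of_le hc] at hy
    have h1 : (x0:ℝ) ≤ y := NNReal.coe_le_coe.2 hy.1
    have h2 : (y:ℝ) ≤ x := NNReal.coe_le_coe.2 hy.2
    have h3 : (x0:ℝ) ≤ x := NNReal.coe_le_coe.2 hc
    rw [NNReal.dist_eq, NNReal.dist_eq, abs_of_nonneg (by linarith),
      abs_of_nonneg (by linarith)]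
    linarith
  · rw [uIcc_of_ge hc] at hy
    have h1 : (x:ℝ) ≤ y := NNReal.coe_le_coe.2 hy.1
    have h2 : (y:ℝ) ≤ x0 := NNReal.coe_le_coe.2 hy.2
    have h3 : (x:ℝ) ≤ x0 := NNReal.coe_le_coe.2 hc
    rw [NNReal.dist_eq, NNReal.dist_eq, abs_of_nonpos (by linarith),
      abs_of_nonpos (by linarith)]
    linarith


lemma trim_union (a b c : ℝ≥0) :
    Icc (min a c) (max a c) ⊆ Icc (min a b) (max a b) ∪ Icc (min b c) (max b c) := by
  rintro x ⟨hx1, hx2⟩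
  rcases le_total x b with hxb | hbx
  · rcases le_total a x with hax | hxa
    · exact Or.inl ⟨le_trans (min_le_left a b) hax, le_trans hxb (le_max_right a b)⟩
    · have hcx : c ≤ x ∨ a ≤ x := by
        rcases min_cases a c with ⟨he, _⟩ | ⟨he, _⟩
        · right; rw [he] at hx1; exact hx1
        · left; rw [he] at hx1; exact hx1
      rcases hcx with hcx | hax
      · exact Or.inr ⟨le_trans (min_le_right b c) hcx, le_trans hxb (le_max_left b c)⟩
      · exact Or.inl ⟨le_trans (min_le_left a b) hax, le_trans hxb (le_max_right a b)⟩
  · rcases le_total x a with hxa | hax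
    · exact Or.inl ⟨le_trans (min_le_right a b) hbx, le_trans hxa (le_max_left a b)⟩
    · have hxc : x ≤ c ∨ x ≤ a := by
        rcases max_cases a c with ⟨he, _⟩ | ⟨he, _⟩
        · right; rw [he] at hx2; exact hx2
        · left; rw [he] at hx2; exact hx2
      rcases hxc with hxc | hxa
      · exact Or.inr ⟨le_trans (min_le_left b c) hbx, le_trans hxc (le_max_right b c)⟩
      · exact Or.inl ⟨le_trans (min_le_right a b) hbx, le_trans hxa (le_max_left a b)⟩

lemma trim_union' (a b c : ℝ≥0) : uIcc a c ⊆ uIcc a b ∪ uIcc b c := by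
  rw [← trim_icc_eq_uIcc, ← trim_icc_eq_uIcc, ← trim_icc_eq_uIcc]
  exact trim_union a b c

/-- Continuity of `x ↦ inf_{[t∧x, t∨x]} F`. -/
lemma trim_cont_inf (F : ℝ≥0 → ℝ) (hF : Continuous F) (t : ℝ≥0) :
    Continuous fun x => sInf (F '' Icc (min t x) (max t x)) := by
  simp only [trim_icc_eq_uIcc]
  rw [continuous_iff_continuousAt]
  intro x0
  rw [Metric.continuousAt_iff]
  intro ε hε
  obtain ⟨δ, hδ, hδ'⟩ := Metric.continuousAt_iff.1 (hF.continuousAt (x := x0)) (ε / 3)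
    (by positivity)
  refine ⟨δ, hδ, ?_⟩
  intro x hx
  set m0 := sInf (F '' uIcc t x0) with hm0def
  set mx := sInf (F '' uIcc t x) with hmxdef
  set i := sInf (F '' uIcc x0 x) with hidef
  have hiF : F x0 - ε / 3 ≤ i := by
    refine le_csInf (trim_img_ne' F x0 x) ?_
    rintro y ⟨w, hw, rfl⟩
    have := hδ' (lt_of_le_of_lt (trim_dist_le_uIcc hw) hx)
    rw [Real.dist_eq, abs_lt] at this
    linarith [this.2]
  have hsub1 : mx ≥ min m0 i := by
    have h1 : uIcc t x ⊆ uIcc t x0 ∪ uIcc x0 x := trim_union' t x0 x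
    have h2 : sInf (F '' (uIcc t x0 ∪ uIcc x0 x)) ≤ mx := by
      refine csInf_le_csInf ?_ (trim_img_ne' F t x) (image_mono h1)
      rw [image_union]
      exact (trim_img_bdd' F hF t x0).union (trim_img_bdd' F hF x0 x)
    rw [image_union, csInf_union (trim_img_bdd' F hF t x0) (trim_img_ne' F t x0)
      (trim_img_bdd' F hF x0 x) (trim_img_ne' F x0 x)] at h2
    exact le_trans le_rfl h2
  have hsub2 : m0 ≥ min mx i := by
    have h1 : uIcc t x0 ⊆ uIcc t x ∪ uIcc x x0 := trim_union' t x x0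
    have h2 : sInf (F '' (uIcc t x ∪ uIcc x x0)) ≤ m0 := by
      refine csInf_le_csInf ?_ (trim_img_ne' F t x0) (image_mono h1)
      rw [image_union]
      exact (trim_img_bdd' F hF t x).union (trim_img_bdd' F hF x x0)
    rw [image_union, csInf_union (trim_img_bdd' F hF t x) (trim_img_ne' F t x)
      (trim_img_bdd' F hF x x0) (trim_img_ne' F x x0), uIcc_comm x x0] at h2
    exact le_trans le_rfl h2
  have hm0le : m0 ≤ F x0 := csInf_le (trim_img_bdd' F hF t x0) ⟨x0, trim_right_mem t x0, rfl⟩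
  have hmxle : mx ≤ F x := csInf_le (trim_img_bdd' F hF t x) ⟨x, trim_right_mem t x, rfl⟩
  have hFx : dist (F x) (F x0) < ε / 3 := hδ' hx
  rw [Real.dist_eq, abs_lt] at hFx ⊢
  rcases min_cases m0 i with ⟨he, _⟩ | ⟨he, _⟩ <;> rcases min_cases mx i with ⟨he2, _⟩ | ⟨he2, _⟩ <;>
    rw [he] at hsub1 <;> rw [he2] at hsub2 <;> constructor <;> linarith [hFx.1, hFx.2]

end TrimAux

section TrimMain

open Filter Topology

variable {h : ℝ} {f c0 ch : ℝ≥0 → ℝ}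

/-- The h-cut function. -/
noncomputable def Gcut (f c0 ch : ℝ≥0 → ℝ) : ℝ≥0 → ℝ := fun v => f v - (f v + ch v + c0 v)

/-- The time change from trimming times to `h`-cut times. -/
noncomputable def phiT (f c0 ch : ℝ≥0 → ℝ) (t : ℝ≥0) : ℝ≥0 :=
  sInf {u | t ≤ u ∧ f t ≤ Gcut f c0 ch u}

lemma Gcut_def (v : ℝ≥0) : Gcut f c0 ch v = f v - (f v + ch v + c0 v) := rfl

lemma Gcut_cont (hf : Continuous f) (hp : SkorohodPair h f c0 ch) :
    Continuous (Gcut f c0 ch) :=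
  hf.sub ((hf.add hp.conth).add hp.cont0)

lemma Gcut_le (hp : SkorohodPair h f c0 ch) (v : ℝ≥0) : Gcut f c0 ch v ≤ f v := by
  have := (hp.mem_Icc v).1; rw [Gcut_def]; linarith

/-- Workhorse 1: last zero of the reflected path before `b`. -/
lemma W1 (hf : Continuous f) (hf0 : f 0 = 0) (hp : SkorohodPair h f c0 ch) (b : ℝ≥0) :
    ∃ z, z ≤ b ∧ f z + ch z + c0 z = 0 ∧
      ∀ p, z ≤ p → p ≤ b → Gcut f c0 ch p ≤ Gcut f c0 ch b := by
  classical
  have hΛc : Continuous fun v => f v + ch v + c0 v := (hf.add hp.conth).add hp.cont0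
  have hS0 : (0 : ℝ≥0) ∈ {s : ℝ≥0 | s ≤ b ∧ f s + ch s + c0 s = 0} :=
    ⟨(zero_le : (0:ℝ≥0) ≤ b), by rw [hf0, hp.init0, hp.inith]; ring⟩
  have hScl : IsClosed {s : ℝ≥0 | s ≤ b ∧ f s + ch s + c0 s = 0} := by
    have : {s : ℝ≥0 | s ≤ b ∧ f s + ch s + c0 s = 0} =
        Iic b ∩ (fun v => f v + ch v + c0 v) ⁻¹' {0} := Set.ext fun x => Iff.rfl
    rw [this]; exact isClosed_Iic.inter (isClosed_singleton.preimage hΛc)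
  have hScp : IsCompact {s : ℝ≥0 | s ≤ b ∧ f s + ch s + c0 s = 0} := by
    refine IsCompact.of_isClosed_subset (isCompact_Icc (a := (0:ℝ≥0)) (b := b)) hScl ?_
    intro x hx; exact ⟨(zero_le : (0:ℝ≥0) ≤ x), hx.1⟩
  obtain ⟨hzb, hΛz⟩ := hScp.sSup_mem ⟨0, hS0⟩
  refine ⟨sSup {s : ℝ≥0 | s ≤ b ∧ f s + ch s + c0 s = 0}, hzb, hΛz, ?_⟩
  set z := sSup {s : ℝ≥0 | s ≤ b ∧ f s + ch s + c0 s = 0} with hzdef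
  have hnot : ∀ x, z < x → x ≤ b → f x + ch x + c0 x ≠ 0 := fun x hzx hxb hΛx =>
    absurd (le_csSup hScp.bddAbove (⟨hxb, hΛx⟩ :
      x ∈ {s : ℝ≥0 | s ≤ b ∧ f s + ch s + c0 s = 0})) (not_le.2 hzx)
  -- c0 is constant on [z,b]
  have hc0 : c0 z = c0 b := by
    rcases eq_or_lt_of_le hzb with heq | hzb'
    · rw [heq]
    have hle : ∀ x ∈ Ioc z b, c0 b - c0 x ≤ 0 := by
      intro x hxz
      have := hp.flat0 x b hxz.2 (fun y hy => hnot y (lt_of_lt_of_le hxz.1 hy.1) hy.2)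
      linarith [this.le, this.ge]
    have h1 : c0 b - c0 z ≤ 0 := trim_le_closure (fun x => c0 b - c0 x)
      (continuous_const.sub hp.cont0)
      (A := Ioc z b) (z := z) (by rw [closure_Ioc hzb'.ne]; exact ⟨le_refl z, hzb⟩) hle
    have hmono := hp.mono0 hzb
    linarith
  intro p hzp hpb
  have hc0p : c0 p = c0 b := le_antisymm (hp.mono0 hpb) (hc0 ▸ hp.mono0 hzp)
  have hchp : ch b ≤ ch p := hp.antih hpb
  rw [Gcut_def, Gcut_def, hc0p]
  linarith

/-- Workhorse 2: last `h`-hit of the reflected path before `b`, provided `g b > 0`. -/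
lemma W2 (hf : Continuous f) (hp : SkorohodPair h f c0 ch) (b : ℝ≥0)
    (hgb : 0 < Gcut f c0 ch b) :
    ∃ w, w ≤ b ∧ f w + ch w + c0 w = h ∧
      ∀ p, w ≤ p → p ≤ b → Gcut f c0 ch b ≤ Gcut f c0 ch p := by
  classical
  have hΛc : Continuous fun v => f v + ch v + c0 v := (hf.add hp.conth).add hp.cont0
  have hSne : {s : ℝ≥0 | s ≤ b ∧ f s + ch s + c0 s = h}.Nonempty := by
    by_contra hne
    rw [Set.not_nonempty_iff_eq_empty] at hne
    have hchb : ch b = ch 0 := by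
      refine hp.flath 0 b ((zero_le : (0:ℝ≥0) ≤ b)) ?_
      intro y hy hyh
      have : y ∈ {s : ℝ≥0 | s ≤ b ∧ f s + ch s + c0 s = h} := ⟨hy.2, hyh⟩
      rw [hne] at this
      exact this
    have h1 : Gcut f c0 ch b = f b - (f b + ch b + c0 b) := rfl
    have h2 : c0 0 ≤ c0 b := hp.mono0 ((zero_le : (0:ℝ≥0) ≤ b))
    rw [hchb, hp.inith] at h1
    rw [hp.init0] at h2
    rw [h1] at hgb
    linarith
  have hScl : IsClosed {s : ℝ≥0 | s ≤ b ∧ f s + ch s + c0 s = h} := by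
    have : {s : ℝ≥0 | s ≤ b ∧ f s + ch s + c0 s = h} =
        Iic b ∩ (fun v => f v + ch v + c0 v) ⁻¹' {h} := Set.ext fun x => Iff.rfl
    rw [this]; exact isClosed_Iic.inter (isClosed_singleton.preimage hΛc)
  have hScp : IsCompact {s : ℝ≥0 | s ≤ b ∧ f s + ch s + c0 s = h} := by
    refine IsCompact.of_isClosed_subset (isCompact_Icc (a := (0:ℝ≥0)) (b := b)) hScl ?_
    intro x hx; exact ⟨(zero_le : (0:ℝ≥0) ≤ x), hx.1⟩
  obtain ⟨hwb, hΛw⟩ := hScp.sSup_mem hSne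
  refine ⟨sSup {s : ℝ≥0 | s ≤ b ∧ f s + ch s + c0 s = h}, hwb, hΛw, ?_⟩
  set w := sSup {s : ℝ≥0 | s ≤ b ∧ f s + ch s + c0 s = h} with hwdef
  have hnot : ∀ x, w < x → x ≤ b → f x + ch x + c0 x ≠ h := fun x hwx hxb hΛx =>
    absurd (le_csSup hScp.bddAbove (⟨hxb, hΛx⟩ :
      x ∈ {s : ℝ≥0 | s ≤ b ∧ f s + ch s + c0 s = h})) (not_le.2 hwx)
  have hch : ch w = ch b := by
    rcases eq_or_lt_of_le hwb with heq | hwb'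
    · rw [heq]
    have heqIoc : ∀ x ∈ Ioc w b, ch b - ch x = 0 := by
      intro x hxw
      have := hp.flath x b hxw.2 (fun y hy => hnot y (lt_of_lt_of_le hxw.1 hy.1) hy.2)
      linarith
    have h1 : ch b - ch w ≤ 0 := trim_le_closure (fun x => ch b - ch x)
      (continuous_const.sub hp.conth)
      (A := Ioc w b) (z := w) (by rw [closure_Ioc hwb'.ne]; exact ⟨le_refl w, hwb⟩)
      (fun x hx => (heqIoc x hx).le)
    have h2 : (0:ℝ) ≤ ch b - ch w := trim_ge_closure (fun x => ch b - ch x)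
      (continuous_const.sub hp.conth)
      (A := Ioc w b) (z := w) (by rw [closure_Ioc hwb'.ne]; exact ⟨le_refl w, hwb⟩)
      (fun x hx => (heqIoc x hx).ge)
    linarith
  intro p hwp hpb
  have hchp : ch p = ch b := le_antisymm (hch ▸ hp.antih hwp) (hp.antih hpb)
  have hc0p : c0 p ≤ c0 b := hp.mono0 hpb
  rw [Gcut_def, Gcut_def, hchp]
  linarith

lemma Gcut_nonneg (hf : Continuous f) (hpos : ∀ t, 0 ≤ f t) (hf0 : f 0 = 0)
    (hp : SkorohodPair h f c0 ch) (b : ℝ≥0) : 0 ≤ Gcut f c0 ch b := by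
  obtain ⟨z, hzb, hΛz, hmax⟩ := W1 hf hf0 hp b
  have h1 := hmax z (le_refl z) hzb
  rw [Gcut_def] at h1
  have := hpos z
  linarith

/-- Right-witness: below a rising stretch of height `h`, `g` reaches `f t`. -/
lemma RW (hp : SkorohodPair h f c0 ch) {t v : ℝ≥0} (htv : t ≤ v)
    (hbd : ∀ x ∈ Icc t v, f t ≤ f x) (hv : f t + h ≤ f v) :
    ∃ u, u ∈ Icc t v ∧ f t ≤ Gcut f c0 ch u := by
  by_contra hcon
  push_neg at hcon
  have hne : ∀ y ∈ Icc t v, f y + ch y + c0 y ≠ 0 := by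
    intro y hy hΛy
    have h1 : Gcut f c0 ch y < f t := hcon y hy
    have h2 : f t ≤ f y := hbd y hy
    rw [Gcut_def] at h1
    linarith
  have hc0 := hp.flat0 t v htv hne
  have hΛv := (hp.mem_Icc v).2
  have hkey : f t ≤ Gcut f c0 ch v := by
    rw [Gcut_def, hc0]
    linarith
  exact absurd hkey (not_le.2 (hcon v ⟨htv, le_refl v⟩))

/-- Left-witness: after a descent of height `h` along which `f ≥ f t`, the reflected
path is at `0` so `g t = f t`. -/
lemma LW (hf : Continuous f) (hf0 : f 0 = 0)
    (hp : SkorohodPair h f c0 ch) {t v : ℝ≥0} (hvt : v ≤ t)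
    (hbd : ∀ x ∈ Icc v t, f t ≤ f x) (hv : f t + h ≤ f v) :
    Gcut f c0 ch t = f t := by
  obtain ⟨z, hzt, hΛz, hmax⟩ := W1 hf hf0 hp t
  have hgle := Gcut_le hp t
  rcases le_total v z with hvz | hzv
  · have hfz : f t ≤ f z := hbd z ⟨hvz, hzt⟩
    have h1 := hmax z (le_refl z) hzt
    rw [Gcut_def] at h1
    linarith
  · have hgv : f v - h ≤ Gcut f c0 ch v := by
      have := (hp.mem_Icc v).2
      rw [Gcut_def]; linarith
    have := hmax v hzv hvt
    linarith

/-- A bound for `f`. -/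
lemma f_bound (hf : Continuous f) {K : ℝ≥0}
    (hK : ∀ t, K ≤ t → f t = 0) : ∃ B : ℝ, 0 ≤ B ∧ ∀ x, f x ≤ B := by
  obtain ⟨x0, _, hx0⟩ := isCompact_Icc.exists_isMaxOn (nonempty_Icc.2 ((zero_le : (0:ℝ≥0) ≤ K)))
    hf.continuousOn
  refine ⟨max (f x0) 0, le_max_right _ _, fun x => ?_⟩
  rcases le_total x K with hx | hx
  · exact le_trans (hx0 ⟨(zero_le : (0:ℝ≥0) ≤ x), hx⟩) (le_max_left _ _)
  · rw [hK x hx]; exact le_max_right _ _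

lemma trimset_bdd (hf : Continuous f) (hpos : ∀ t, 0 ≤ f t) {K : ℝ≥0}
    (hK : ∀ t, K ≤ t → f t = 0) (s : ℝ≥0) :
    BddAbove ((fun x => treeDist f s x) '' {x | ancT f s x}) := by
  obtain ⟨B, hB0, hB⟩ := f_bound hf hK
  refine ⟨f s + B, ?_⟩
  rintro y ⟨x, _, rfl⟩
  have h1 : (0:ℝ) ≤ sInf (f '' Icc (min s x) (max s x)) := by
    refine le_csInf ?_ ?_
    · rw [trim_icc_eq_uIcc]; exact trim_img_ne' f s x
    · rintro y ⟨w, _, rfl⟩; exact hpos w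
  have h2 : f x ≤ B := hB x
  simp only [treeDist]
  linarith

/-- Build trimness from an explicit witness. -/
lemma mkTrim (hf : Continuous f) (hpos : ∀ t, 0 ≤ f t) {K : ℝ≥0}
    (hK : ∀ t, K ≤ t → f t = 0) {s v : ℝ≥0} (hanc : ancT f s v)
    (hd : h ≤ treeDist f s v) : TrimTime h f s := by
  refine le_trans hd (le_csSup (trimset_bdd hf hpos hK s) ?_)
  exact ⟨v, hanc, rfl⟩

/-- Witness extraction from trimness. -/
lemma trim_witness (hh : 0 < h) (hf : Continuous f) (hpos : ∀ t, 0 ≤ f t)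
    {K : ℝ≥0} (hK : ∀ t, K ≤ t → f t = 0) {t : ℝ≥0} (ht : TrimTime h f t) :
    ∃ v, (∀ x ∈ Icc (min t v) (max t v), f t ≤ f x) ∧ f t + h ≤ f v := by
  classical
  have hanc_self : ancT f t t := by
    simp only [ancT, min_self, max_self, Icc_self, image_singleton, csInf_singleton]
  have hcontm := trim_cont_inf f hf t
  have hD'cl : IsClosed ({x | ancT f t x} ∩ Icc 0 (max t K)) := by
    refine IsClosed.inter ?_ isClosed_Icc
    have : {x | ancT f t x} =
        (fun x => sInf (f '' Icc (min t x) (max t x)) - f t) ⁻¹' {0} := by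
      ext x
      simp only [ancT, Set.mem_setOf_eq, Set.mem_preimage, Set.mem_singleton_iff,
        sub_eq_zero]
    rw [this]
    exact isClosed_singleton.preimage (hcontm.sub continuous_const)
  have hD'cp : IsCompact ({x | ancT f t x} ∩ Icc 0 (max t K)) :=
    IsCompact.of_isClosed_subset isCompact_Icc hD'cl inter_subset_right
  have hD'ne : ({x | ancT f t x} ∩ Icc 0 (max t K)).Nonempty :=
    ⟨t, hanc_self, (zero_le : (0:ℝ≥0) ≤ t), le_max_left t K⟩
  have htd_cont : Continuous fun x => treeDist f t x := by
    simp only [treeDist]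
    exact (continuous_const.add hf).sub (continuous_const.mul hcontm)
  obtain ⟨v, hvD', hvmax⟩ := hD'cp.exists_isMaxOn hD'ne htd_cont.continuousOn
  -- values beyond max t K are nonpositive
  have hbig : ∀ x, ancT f t x → max t K < x → treeDist f t x ≤ 0 := by
    intro x hx hMx
    have hx' : sInf (f '' Icc (min t x) (max t x)) = f t := hx
    have hxK : K ≤ x := le_trans (le_max_right t K) hMx.le
    have hfx : f x = 0 := hK x hxK
    have hxmem : x ∈ Icc (min t x) (max t x) := ⟨min_le_right t x, le_max_right t x⟩
    have hinf_le : sInf (f '' Icc (min t x) (max t x)) ≤ f x := trim_inf_le f hf hxmem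
    rw [hx', hfx] at hinf_le
    have hft0 : f t = 0 := le_antisymm hinf_le (hpos t)
    simp only [treeDist, hx', hfx, hft0]
    linarith
  have hsup_le : sSup ((fun s => treeDist f t s) '' {s | ancT f t s}) ≤
      max (treeDist f t v) 0 := by
    refine csSup_le ⟨treeDist f t t, t, hanc_self, rfl⟩ ?_
    rintro y ⟨x, hx, rfl⟩
    rcases le_total x (max t K) with hxM | hxM
    · exact le_trans (hvmax (⟨hx, (zero_le : (0:ℝ≥0) ≤ x), hxM⟩ :
        x ∈ {x | ancT f t x} ∩ Icc 0 (max t K))) (le_max_left _ _)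
    · rcases eq_or_lt_of_le hxM with heq | hxM'
      · refine le_trans (hvmax (⟨hx, (zero_le : (0:ℝ≥0) ≤ x), ?_⟩ :
          x ∈ {x | ancT f t x} ∩ Icc 0 (max t K))) (le_max_left _ _)
        rw [← heq]
      · exact le_trans (hbig x hx hxM') (le_max_right _ _)
  have hhv : h ≤ treeDist f t v := by
    have h1 : h ≤ max (treeDist f t v) 0 := le_trans ht hsup_le
    rcases max_cases (treeDist f t v) 0 with ⟨he, _⟩ | ⟨he, _⟩
    · rwa [he] at h1
    · rw [he] at h1; linarith
  have hancv : sInf (f '' Icc (min t v) (max t v)) = f t := hvD'.1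
  refine ⟨v, ?_, ?_⟩
  · intro x hx
    have := trim_inf_le f hf hx
    rwa [hancv] at this
  · simp only [treeDist, hancv] at hhv
    linarith

/-! ### Properties of the time change `phiT` -/

lemma phiT_spec (hh : 0 < h) (hf : Continuous f) (hpos : ∀ t, 0 ≤ f t) (hf0 : f 0 = 0)
    {K : ℝ≥0} (hK : ∀ t, K ≤ t → f t = 0) (hp : SkorohodPair h f c0 ch) {t : ℝ≥0}
    (ht : TrimTime h f t) :
    t ≤ phiT f c0 ch t ∧ f t ≤ Gcut f c0 ch (phiT f c0 ch t) := by
  have hUcl : IsClosed {u : ℝ≥0 | t ≤ u ∧ f t ≤ Gcut f c0 ch u} := by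
    have : {u : ℝ≥0 | t ≤ u ∧ f t ≤ Gcut f c0 ch u} =
        Ici t ∩ (Gcut f c0 ch) ⁻¹' (Ici (f t)) := Set.ext fun x => Iff.rfl
    rw [this]
    exact isClosed_Ici.inter (isClosed_Ici.preimage (Gcut_cont hf hp))
  have hUne : {u : ℝ≥0 | t ≤ u ∧ f t ≤ Gcut f c0 ch u}.Nonempty := by
    obtain ⟨v, hbd, hv⟩ := trim_witness hh hf hpos hK ht
    rcases le_total t v with htv | hvt
    · obtain ⟨u, hu, hgu⟩ := RW hp htv
        (by rwa [min_eq_left htv, max_eq_right htv] at hbd) hv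
      exact ⟨u, hu.1, hgu⟩
    · have := LW hf hf0 hp hvt (by rwa [min_eq_right hvt, max_eq_left hvt] at hbd) hv
      exact ⟨t, le_refl t, this.ge⟩
  exact hUcl.csInf_mem hUne (OrderBot.bddBelow _)

lemma phiT_eq (hh : 0 < h) (hf : Continuous f) (hpos : ∀ t, 0 ≤ f t) (hf0 : f 0 = 0)
    {K : ℝ≥0} (hK : ∀ t, K ≤ t → f t = 0) (hp : SkorohodPair h f c0 ch) {t : ℝ≥0}
    (ht : TrimTime h f t) : Gcut f c0 ch (phiT f c0 ch t) = f t := by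
  obtain ⟨h1, h2⟩ := phiT_spec hh hf hpos hf0 hK hp ht
  refine le_antisymm ?_ h2
  rcases eq_or_lt_of_le h1 with he | hlt
  · rw [← he]; exact Gcut_le hp t
  · refine trim_le_closure (Gcut f c0 ch) (Gcut_cont hf hp) (A := Ico t (phiT f c0 ch t))
      (z := phiT f c0 ch t) ?_ ?_
    · rw [closure_Ico hlt.ne]; exact ⟨hlt.le, le_refl _⟩
    · intro x hx
      by_contra hcon
      push_neg at hcon
      have hxU : x ∈ {u : ℝ≥0 | t ≤ u ∧ f t ≤ Gcut f c0 ch u} := ⟨hx.1, hcon.le⟩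
      exact absurd (csInf_le (OrderBot.bddBelow _) hxU) (not_le.2 hx.2)

lemma phiT_le {t u : ℝ≥0} (htu : t ≤ u)
    (hgu : f t ≤ Gcut f c0 ch u) : phiT f c0 ch t ≤ u :=
  csInf_le (OrderBot.bddBelow _) ⟨htu, hgu⟩

/-- On `[t, φ t]`, `f` stays above `f t`. -/
lemma phiT_f_ge (hh : 0 < h) (hf : Continuous f) (hpos : ∀ t, 0 ≤ f t) (hf0 : f 0 = 0)
    {K : ℝ≥0} (hK : ∀ t, K ≤ t → f t = 0) (hp : SkorohodPair h f c0 ch) {t : ℝ≥0}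
    (ht : TrimTime h f t) : ∀ x ∈ Icc t (phiT f c0 ch t), f t ≤ f x := by
  obtain ⟨v, hbd, hv⟩ := trim_witness hh hf hpos hK ht
  rcases le_total t v with htv | hvt
  · rw [min_eq_left htv, max_eq_right htv] at hbd
    obtain ⟨u, hu, hgu⟩ := RW hp htv hbd hv
    have hφ : phiT f c0 ch t ≤ v := le_trans (phiT_le hu.1 hgu) hu.2
    intro x hx
    exact hbd x ⟨hx.1, le_trans hx.2 hφ⟩
  · rw [min_eq_right hvt, max_eq_left hvt] at hbd
    have hgt := LW hf hf0 hp hvt hbd hv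
    have hφ : phiT f c0 ch t ≤ t := phiT_le (le_refl t) hgt.ge
    intro x hx
    have hxt : x = t := le_antisymm (le_trans hx.2 hφ) hx.1
    rw [hxt]

/-- Monotonicity of the time change on trim times. -/
lemma phiT_mono (hh : 0 < h) (hf : Continuous f) (hpos : ∀ t, 0 ≤ f t) (hf0 : f 0 = 0)
    {K : ℝ≥0} (hK : ∀ t, K ≤ t → f t = 0) (hp : SkorohodPair h f c0 ch) {s t : ℝ≥0}
    (hs : TrimTime h f s) (ht : TrimTime h f t) (hst : s ≤ t) :
    phiT f c0 ch s ≤ phiT f c0 ch t := by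
  by_contra hcon
  push_neg at hcon
  obtain ⟨hts, _⟩ := phiT_spec hh hf hpos hf0 hK hp ht
  obtain ⟨v, hbd, hv⟩ := trim_witness hh hf hpos hK hs
  rcases le_total s v with hsv | hvs
  · rw [min_eq_left hsv, max_eq_right hsv] at hbd
    obtain ⟨u, hu, hgu⟩ := RW hp hsv hbd hv
    have hφsv : phiT f c0 ch s ≤ v := le_trans (phiT_le hu.1 hgu) hu.2
    have htv : t ≤ v := le_trans hts (le_trans hcon.le hφsv)
    have hfts : f s ≤ f t := hbd t ⟨hst, htv⟩
    have hnotin : ¬ (phiT f c0 ch t ∈ {u : ℝ≥0 | s ≤ u ∧ f s ≤ Gcut f c0 ch u}) := by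
      intro hmem
      exact absurd (csInf_le (OrderBot.bddBelow _) hmem) (not_le.2 hcon)
    have h1 : s ≤ phiT f c0 ch t := le_trans hst hts
    have h2 : ¬ (f s ≤ Gcut f c0 ch (phiT f c0 ch t)) := fun hc => hnotin ⟨h1, hc⟩
    rw [phiT_eq hh hf hpos hf0 hK hp ht] at h2
    exact h2 hfts
  · rw [min_eq_right hvs, max_eq_left hvs] at hbd
    have hgs := LW hf hf0 hp hvs hbd hv
    have h1 : phiT f c0 ch s ≤ s := phiT_le (le_refl s) hgs.ge
    exact absurd (le_trans h1 (le_trans hst hts)) (not_le.2 hcon)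

/-- The main isometry identity, for ordered trim times. -/
lemma iso_ordered (hh : 0 < h) (hf : Continuous f) (hpos : ∀ t, 0 ≤ f t) (hf0 : f 0 = 0)
    {K : ℝ≥0} (hK : ∀ t, K ≤ t → f t = 0) (hp : SkorohodPair h f c0 ch) {s t : ℝ≥0}
    (hs : TrimTime h f s) (ht : TrimTime h f t) (hst : s ≤ t) :
    treeDist (Gcut f c0 ch) (phiT f c0 ch s) (phiT f c0 ch t) = treeDist f s t := by
  have hG := Gcut_cont hf hp
  have hφmono := phiT_mono hh hf hpos hf0 hK hp hs ht hst
  have hgs := phiT_eq hh hf hpos hf0 hK hp hs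
  have hgt := phiT_eq hh hf hpos hf0 hK hp ht
  obtain ⟨hsφ, _⟩ := phiT_spec hh hf hpos hf0 hK hp hs
  obtain ⟨htφ, _⟩ := phiT_spec hh hf hpos hf0 hK hp ht
  have hkey : sInf (Gcut f c0 ch '' Icc (phiT f c0 ch s) (phiT f c0 ch t)) =
      sInf (f '' Icc s t) := by
    apply le_antisymm
    · obtain ⟨r, hr, hrmin⟩ := trim_exists_min f hf hst
      rcases le_or_gt (f s) (f r) with hc | hc
      · have h2 : sInf (Gcut f c0 ch '' Icc (phiT f c0 ch s) (phiT f c0 ch t)) ≤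
            Gcut f c0 ch (phiT f c0 ch s) := trim_inf_le _ hG ⟨le_refl _, hφmono⟩
        rw [hgs] at h2
        rw [← hrmin]
        exact le_trans h2 hc
      · have hrφ : phiT f c0 ch s ≤ r := by
          by_contra hrlt
          push_neg at hrlt
          exact absurd (phiT_f_ge hh hf hpos hf0 hK hp hs r ⟨hr.1, hrlt.le⟩) (not_le.2 hc)
        have h3 : sInf (Gcut f c0 ch '' Icc (phiT f c0 ch s) (phiT f c0 ch t)) ≤
            Gcut f c0 ch r := trim_inf_le _ hG ⟨hrφ, le_trans hr.2 htφ⟩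
        rw [← hrmin]
        exact le_trans h3 (Gcut_le hp r)
    · refine trim_le_inf _ hφmono ?_
      intro x hx
      obtain ⟨z, hzx, hΛz, hmax⟩ := W1 hf hf0 hp x
      have hgz_le : Gcut f c0 ch z ≤ Gcut f c0 ch x := hmax z (le_refl z) hzx
      have hgz_eq : Gcut f c0 ch z = f z := by rw [Gcut_def]; linarith
      rcases lt_or_ge z s with hzs | hsz
      · have h1 : Gcut f c0 ch (phiT f c0 ch s) ≤ Gcut f c0 ch x :=
          hmax _ (le_trans hzs.le hsφ) hx.1
        rw [hgs] at h1
        have h2 : sInf (f '' Icc s t) ≤ f s := trim_inf_le f hf ⟨le_refl s, hst⟩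
        linarith
      · rcases le_or_gt z t with hzt | htz
        · have h2 : sInf (f '' Icc s t) ≤ f z := trim_inf_le f hf ⟨hsz, hzt⟩
          linarith
        · have hz2 : f t ≤ f z := phiT_f_ge hh hf hpos hf0 hK hp ht z
            ⟨htz.le, le_trans hzx hx.2⟩
          have h2 : sInf (f '' Icc s t) ≤ f t := trim_inf_le f hf ⟨hst, le_refl t⟩
          linarith
  simp only [treeDist, min_eq_left hst, max_eq_right hst, min_eq_left hφmono,
    max_eq_right hφmono, hkey, hgs, hgt]

/-- Surjectivity onto the tree coded by the h-cut. -/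
lemma surj_lemma (hh : 0 < h) (hf : Continuous f) (hpos : ∀ t, 0 ≤ f t) (hf0 : f 0 = 0)
    {K : ℝ≥0} (hK : ∀ t, K ≤ t → f t = 0) (hsup : h ≤ sSup (Set.range f))
    (hp : SkorohodPair h f c0 ch) (u : ℝ≥0) :
    ∃ s, TrimTime h f s ∧ treeDist (Gcut f c0 ch) (phiT f c0 ch s) u = 0 := by
  classical
  have hG := Gcut_cont hf hp
  have hgu0 : 0 ≤ Gcut f c0 ch u := Gcut_nonneg hf hpos hf0 hp u
  have hScl : IsClosed {x : ℝ≥0 | x ≤ u ∧ f x ≤ Gcut f c0 ch u} := by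
    have : {x : ℝ≥0 | x ≤ u ∧ f x ≤ Gcut f c0 ch u} =
        Iic u ∩ f ⁻¹' (Iic (Gcut f c0 ch u)) := Set.ext fun x => Iff.rfl
    rw [this]; exact isClosed_Iic.inter (isClosed_Iic.preimage hf)
  have hScp : IsCompact {x : ℝ≥0 | x ≤ u ∧ f x ≤ Gcut f c0 ch u} := by
    refine IsCompact.of_isClosed_subset (isCompact_Icc (a := (0:ℝ≥0)) (b := u)) hScl ?_
    intro x hx; exact ⟨(zero_le : (0:ℝ≥0) ≤ x), hx.1⟩
  have hS0 : (0:ℝ≥0) ∈ {x : ℝ≥0 | x ≤ u ∧ f x ≤ Gcut f c0 ch u} :=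
    ⟨(zero_le : (0:ℝ≥0) ≤ u), by rw [hf0]; exact hgu0⟩
  obtain ⟨hsu, hfs_le⟩ := hScp.sSup_mem ⟨0, hS0⟩
  set s := sSup {x : ℝ≥0 | x ≤ u ∧ f x ≤ Gcut f c0 ch u} with hsdef
  have hgt : ∀ x, s < x → x ≤ u → Gcut f c0 ch u < f x := by
    intro x hsx hxu
    by_contra hcc
    push_neg at hcc
    exact absurd (le_csSup hScp.bddAbove (⟨hxu, hcc⟩ :
      x ∈ {x : ℝ≥0 | x ≤ u ∧ f x ≤ Gcut f c0 ch u})) (not_le.2 hsx)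
  have hfs : f s = Gcut f c0 ch u := by
    rcases eq_or_lt_of_le hsu with heq | hsu'
    · refine le_antisymm hfs_le ?_
      rw [heq]; exact Gcut_le hp u
    · refine le_antisymm hfs_le ?_
      refine trim_ge_closure f hf (A := Ioc s u) (z := s)
        (by rw [closure_Ioc hsu'.ne]; exact ⟨le_refl s, hsu⟩) ?_
      intro x hx
      exact (hgt x hx.1 hx.2).le
  have hbd : ∀ x ∈ Icc s u, f s ≤ f x := by
    intro x hx
    rcases eq_or_lt_of_le hx.1 with heq | hlt
    · rw [← heq]
    · rw [hfs]; exact (hgt x hlt hx.2).le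
  -- trimness of s
  have strim : TrimTime h f s := by
    rcases eq_or_lt_of_le (hpos s) with hfs0 | hfs0
    · -- f s = 0 : root case
      have hanc : ∀ x, sInf (f '' Icc (min s x) (max s x)) = f s := by
        intro x
        refine le_antisymm ?_ ?_
        · exact le_trans (trim_inf_le f hf ⟨min_le_left s x, le_max_left s x⟩) (le_refl _)
        · refine le_csInf (by rw [trim_icc_eq_uIcc]; exact trim_img_ne' f s x) ?_
          rintro y ⟨w, _, rfl⟩
          rw [← hfs0]; exact hpos w
      have hfun : (fun x => treeDist f s x) = f := by
        funext x
        simp only [treeDist, hanc x, ← hfs0]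
        ring
      have hall : {x | ancT f s x} = univ := by
        refine eq_univ_iff_forall.2 ?_
        intro x
        exact hanc x
      show h ≤ sSup ((fun x => treeDist f s x) '' {x | ancT f s x})
      rw [hfun, hall, image_univ]
      exact hsup
    · -- f s > 0
      have hgu_pos : 0 < Gcut f c0 ch u := by rw [← hfs]; exact hfs0
      obtain ⟨w, hwu, hΛw, hmin⟩ := W2 hf hp u hgu_pos
      have hfw : f s + h ≤ f w := by
        have h1 := hmin w (le_refl w) hwu
        rw [Gcut_def w] at h1
        rw [hfs]
        linarith
      rcases le_total s w with hsw | hws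
      · have hanc : ancT f s w := by
          show sInf (f '' Icc (min s w) (max s w)) = f s
          rw [min_eq_left hsw, max_eq_right hsw]
          refine le_antisymm (trim_inf_le f hf ⟨le_refl s, hsw⟩) ?_
          exact trim_le_inf f hsw fun x hx => hbd x ⟨hx.1, le_trans hx.2 hwu⟩
        refine mkTrim hf hpos hK hanc ?_
        have hanc' : sInf (f '' Icc (min s w) (max s w)) = f s := hanc
        simp only [treeDist, hanc']
        linarith
      · have hbd2 : ∀ x ∈ Icc w s, f s ≤ f x := by
          intro x hx
          have h1 := hmin x hx.1 (le_trans hx.2 hsu)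
          have h2 := Gcut_le hp x
          rw [hfs]
          linarith
        have hanc : ancT f s w := by
          show sInf (f '' Icc (min s w) (max s w)) = f s
          rw [min_eq_right hws, max_eq_left hws]
          refine le_antisymm (trim_inf_le f hf ⟨hws, le_refl s⟩) ?_
          exact trim_le_inf f hws hbd2
        refine mkTrim hf hpos hK hanc ?_
        have hanc' : sInf (f '' Icc (min s w) (max s w)) = f s := hanc
        simp only [treeDist, hanc']
        linarith
  -- common tail
  obtain ⟨hsφ, _⟩ := phiT_spec hh hf hpos hf0 hK hp strim
  have hφu : phiT f c0 ch s ≤ u := phiT_le hsu (le_of_eq hfs)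
  have hgφ : Gcut f c0 ch (phiT f c0 ch s) = f s := phiT_eq hh hf hpos hf0 hK hp strim
  have hinf : sInf (Gcut f c0 ch '' Icc (phiT f c0 ch s) u) = Gcut f c0 ch u := by
    refine le_antisymm (trim_inf_le _ hG ⟨hφu, le_refl u⟩) ?_
    refine trim_le_inf _ hφu ?_
    intro x hx
    obtain ⟨z, hzx, hΛz, hmax⟩ := W1 hf hf0 hp x
    rcases lt_or_ge z s with hzs | hsz
    · have h1 : Gcut f c0 ch (phiT f c0 ch s) ≤ Gcut f c0 ch x :=
        hmax _ (le_trans hzs.le hsφ) hx.1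
      rw [hgφ, hfs] at h1
      exact h1
    · have h1 := hmax z (le_refl z) hzx
      have h2 : Gcut f c0 ch z = f z := by rw [Gcut_def]; linarith
      have h3 : f s ≤ f z := hbd z ⟨hsz, le_trans hzx hx.2⟩
      rw [h2] at h1
      rw [← hfs]
      linarith
  refine ⟨s, strim, ?_⟩
  simp only [treeDist, min_eq_left hφu, max_eq_right hφu, hinf, hgφ, hfs]
  ring

end TrimMain

theorem trimming_coded_by_h_cut
    (h : ℝ) (hh : 0 < h) (f c0 ch : ℝ≥0 → ℝ) (hf : Continuous f)
    (hpos : ∀ t, 0 ≤ f t) (hf0 : f 0 = 0) (K : ℝ≥0) (hK : ∀ t, K ≤ t → f t = 0)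
    (hsup : h ≤ sSup (Set.range f))
    (hp : SkorohodPair h f c0 ch) :
    ∃ φ : {t : ℝ≥0 // TrimTime h f t} → ℝ≥0,
      (∀ s u : {t : ℝ≥0 // TrimTime h f t},
        treeDist (fun v => f v - (f v + ch v + c0 v)) (φ s) (φ u) = treeDist f s.1 u.1) ∧
      (∀ u : ℝ≥0, ∃ s : {t : ℝ≥0 // TrimTime h f t},
        treeDist (fun v => f v - (f v + ch v + c0 v)) (φ s) u = 0) ∧
      (∀ s : {t : ℝ≥0 // TrimTime h f t}, treeDist f s.1 0 = 0 →
        treeDist (fun v => f v - (f v + ch v + c0 v)) (φ s) 0 = 0) := by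
  have hsymm : ∀ (F : ℝ≥0 → ℝ) (a b : ℝ≥0), treeDist F a b = treeDist F b a := by
    intro F a b
    simp only [treeDist, min_comm a b, max_comm a b]
    ring
  refine ⟨fun s => phiT f c0 ch s.1, ?_, ?_, ?_⟩
  · intro s u
    show treeDist (Gcut f c0 ch) (phiT f c0 ch s.1) (phiT f c0 ch u.1) = treeDist f s.1 u.1
    rcases le_total s.1 u.1 with hle | hle
    · exact iso_ordered hh hf hpos hf0 hK hp s.2 u.2 hle
    · rw [hsymm (Gcut f c0 ch), hsymm f]
      exact iso_ordered hh hf hpos hf0 hK hp u.2 s.2 hle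
  · intro u
    obtain ⟨s, hs, hd⟩ := surj_lemma hh hf hpos hf0 hK hsup hp u
    exact ⟨⟨s, hs⟩, hd⟩
  · rintro ⟨s, hs⟩ hroot
    show treeDist (Gcut f c0 ch) (phiT f c0 ch s) 0 = 0
    -- first: f s = 0
    have hmin0 : sInf (f '' Icc (min s 0) (max s 0)) = 0 := by
      rw [min_eq_right ((zero_le : (0:ℝ≥0) ≤ s)), max_eq_left ((zero_le : (0:ℝ≥0) ≤ s))]
      refine le_antisymm ?_ (trim_le_inf f ((zero_le : (0:ℝ≥0) ≤ s)) fun x _ => hpos x)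
      have := trim_inf_le f hf (a := 0) (b := s) ⟨le_refl 0, (zero_le : (0:ℝ≥0) ≤ s)⟩
      rwa [hf0] at this
    have hfs : f s = 0 := by
      simp only [treeDist, hmin0, hf0] at hroot
      linarith
    have hgφ : Gcut f c0 ch (phiT f c0 ch s) = f s := phiT_eq hh hf hpos hf0 hK hp hs
    have hG0 : Gcut f c0 ch 0 = 0 := by
      rw [Gcut_def, hf0, hp.init0, hp.inith]; ring
    have hming : sInf (Gcut f c0 ch '' Icc (min (phiT f c0 ch s) 0)
        (max (phiT f c0 ch s) 0)) = 0 := by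
      rw [min_eq_right (zero_le), max_eq_left (zero_le)]
      refine le_antisymm ?_ (trim_le_inf _ (zero_le)
        fun x _ => Gcut_nonneg hf hpos hf0 hp x)
      have := trim_inf_le _ (Gcut_cont hf hp) (a := 0) (b := phiT f c0 ch s)
        ⟨le_refl 0, zero_le⟩
      rwa [hG0] at this
    simp only [treeDist, hming, hgφ, hfs, hG0]
    ring
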